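/- arXiv:1012.0689 — 3 statements merged into one kernel-verified Lean document; each statement's English description precedes it below -/
import Mathlib

section
/- For every j ∈ ℕ there exists a constant C_j ≥ 0 such that for every λ > 0 and every r > 0, |(L^j f_λ)(r)| ≤ C_j · λ^{2j}, where f_λ(s) = cos(λ s) and L is the operator (L g)(s) = g′(s)/s acting on smooth functions on (0,∞), with L^j its j-fold iteration. -/
open MeasureTheory intervalIntegral

/-- The operator `(L g)(s) = g'(s) / s`. -/
noncomputable def Lop (g : ℝ → ℝ) : ℝ → ℝ := fun s => deriv g s / s

noncomputable def Naux (j : ℕ) (u : ℝ) : ℝ :=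
  ∫ t in (0:ℝ)..1, (1 - t^2)^j * Real.cos (u*t)

lemma Naux_cont (j : ℕ) (u : ℝ) :
    Continuous fun t : ℝ => (1 - t^2)^j * Real.cos (u*t) := by fun_prop

lemma Naux_cont' (j : ℕ) (u : ℝ) :
    Continuous fun t : ℝ => (1 - t^2)^j * (-Real.sin (u*t) * t) := by fun_prop

lemma pow_abs_le (j : ℕ) {t : ℝ} (h0 : 0 < t) (h1 : t ≤ 1) : |(1 - t^2)^j| ≤ 1 := by
  rw [abs_pow]
  apply pow_le_one₀ (abs_nonneg _)
  rw [abs_le]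
  constructor <;> nlinarith

lemma Naux_bound (j : ℕ) (u : ℝ) : |Naux j u| ≤ 1 := by
  have h := intervalIntegral.norm_integral_le_of_norm_le_const (C := 1)
    (f := fun t : ℝ => (1 - t^2)^j * Real.cos (u*t)) (a := (0:ℝ)) (b := 1) ?_
  · simpa [Naux] using h
  · intro t ht
    rw [Set.uIoc_of_le (by norm_num : (0:ℝ) ≤ 1)] at ht
    have h2 := pow_abs_le j ht.1 ht.2
    rw [Real.norm_eq_abs, abs_mul]
    have := Real.abs_cos_le_one (u*t)
    nlinarith [abs_nonneg ((1 - t^2)^j), abs_nonneg (Real.cos (u*t))]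

lemma sin_mul_deriv (u t : ℝ) :
    HasDerivAt (fun t : ℝ => Real.sin (u*t)) (Real.cos (u*t) * u) t := by
  simpa using ((hasDerivAt_id t).const_mul u).sin

lemma parts (j : ℕ) (u : ℝ) :
    ∫ t in (0:ℝ)..1, (1 - t^2)^j * (-Real.sin (u*t) * t)
      = -(u / (2*(j+1))) * Naux (j+1) u := by
  have key : ∫ t in (0:ℝ)..1,
      ((1 - t^2)^j * (-Real.sin (u*t) * t) + (u/(2*((j:ℝ)+1))) * ((1 - t^2)^(j+1) * Real.cos (u*t)))
      = 0 := by
    have hderiv : ∀ t ∈ Set.uIcc (0:ℝ) 1, HasDerivAt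
        (fun t => (1/(2*((j:ℝ)+1))) * ((1 - t^2)^(j+1) * Real.sin (u*t)))
        ((1 - t^2)^j * (-Real.sin (u*t) * t)
          + (u/(2*((j:ℝ)+1))) * ((1 - t^2)^(j+1) * Real.cos (u*t))) t := by
      intro t _
      have h1 : HasDerivAt (fun t : ℝ => 1 - t^2) (-(2*t^1)) t :=
        (hasDerivAt_pow 2 t).const_sub 1
      have h1' : HasDerivAt (fun t : ℝ => (1 - t^2)^(j+1))
          ((↑(j+1) : ℝ) * (1 - t^2)^(j+1-1) * (-(2*t^1))) t := h1.pow (j+1)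
      have := ((h1'.mul (sin_mul_deriv u t)).const_mul (1/(2*((j:ℝ)+1))))
      convert this using 1
      · rfl
      · rfl
      · rfl
      have hj1 : (2*((j:ℝ)+1)) ≠ 0 := by positivity
      push_cast
      field_simp
    have hcont : Continuous fun t : ℝ => ((1 - t^2)^j * (-Real.sin (u*t) * t)
        + (u/(2*((j:ℝ)+1))) * ((1 - t^2)^(j+1) * Real.cos (u*t))) := by fun_prop
    have h := intervalIntegral.integral_eq_sub_of_hasDerivAt hderiv
      (hcont.intervalIntegrable 0 1)
    rw [h]; norm_num
  rw [intervalIntegral.integral_add ((Naux_cont' j u).intervalIntegrable 0 1)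
    (((by fun_prop : Continuous fun t : ℝ => (u/(2*((j:ℝ)+1))) * ((1 - t^2)^(j+1) * Real.cos (u*t)))).intervalIntegrable 0 1),
    intervalIntegral.integral_const_mul] at key
  have hN : (∫ t in (0:ℝ)..1, (1 - t^2)^(j+1) * Real.cos (u*t)) = Naux (j+1) u := rfl
  rw [hN] at key
  linarith

lemma hasDerivAt_Naux (j : ℕ) (u : ℝ) :
    HasDerivAt (Naux j) (-(u / (2*((j:ℝ)+1))) * Naux (j+1) u) u := by
  have main := intervalIntegral.hasDerivAt_integral_of_dominated_loc_of_deriv_le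
    (F := fun x t => (1 - t^2)^j * Real.cos (x*t))
    (F' := fun x t => (1 - t^2)^j * (-Real.sin (x*t) * t))
    (x₀ := u) (a := (0:ℝ)) (b := 1) (μ := volume) (bound := fun _ => 1)
    (s := Metric.ball u 1) (Metric.ball_mem_nhds u zero_lt_one)
    (Filter.Eventually.of_forall fun x => (Naux_cont j x).aestronglyMeasurable)
    ((Naux_cont j u).intervalIntegrable 0 1)
    (Naux_cont' j u).aestronglyMeasurable
    (Filter.Eventually.of_forall ?_)
    intervalIntegrable_const
    (Filter.Eventually.of_forall ?_)
  · rw [← parts j u]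
    exact main.2
  · intro t ht x _
    rw [Set.uIoc_of_le (by norm_num : (0:ℝ) ≤ 1)] at ht
    have h2 := pow_abs_le j ht.1 ht.2
    show ‖(1 - t^2)^j * (-Real.sin (x*t) * t)‖ ≤ 1
    rw [Real.norm_eq_abs, abs_mul, abs_mul, abs_neg]
    have hs := Real.abs_sin_le_one (x*t)
    have ht1 : |t| ≤ 1 := by rw [abs_of_pos ht.1]; exact ht.2
    exact mul_le_one₀ h2 (by positivity) (mul_le_one₀ hs (abs_nonneg _) ht1)
  · intro t _ x _
    exact ((hasDerivAt_mul_const t).cos).const_mul _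

lemma rep : ∀ j : ℕ, ∀ u : ℝ, u ≠ 0 →
    Lop^[j+1] Real.cos u = ((-1:ℝ)^(j+1) / (2^j * (Nat.factorial j))) * Naux j u := by
  intro j
  induction j with
  | zero =>
    intro u hu
    have hN : Naux 0 u = Real.sin u / u := by
      have hderiv : ∀ t ∈ Set.uIcc (0:ℝ) 1, HasDerivAt (fun t => Real.sin (u*t) / u)
          ((1 - t^2)^0 * Real.cos (u*t)) t := by
        intro t _
        have := (sin_mul_deriv u t).div_const u
        convert this using 1
        · rfl
        · rfl
        field_simp
      have h := intervalIntegral.integral_eq_sub_of_hasDerivAt hderiv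
        ((Naux_cont 0 u).intervalIntegrable 0 1)
      unfold Naux
      rw [h]; simp
    rw [Function.iterate_one]
    show deriv Real.cos u / u = _
    rw [Real.deriv_cos', hN]
    simp [Nat.factorial]
    ring
  | succ j ih =>
    intro u hu
    rw [Function.iterate_succ_apply']
    have hev : Lop^[j+1] Real.cos =ᶠ[nhds u]
        fun v => ((-1:ℝ)^(j+1) / (2^j * (Nat.factorial j))) * Naux j v :=
      (eventually_ne_nhds hu).mono fun v hv => ih v hv
    have hd : deriv (Lop^[j+1] Real.cos) u
        = ((-1:ℝ)^(j+1) / (2^j * (Nat.factorial j))) * (-(u / (2*((j:ℝ)+1))) * Naux (j+1) u) := by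
      rw [hev.deriv_eq, deriv_const_mul_field, (hasDerivAt_Naux j u).deriv]
    show deriv (Lop^[j+1] Real.cos) u / u = _
    rw [hd]
    have h2 : ((2:ℝ)^j * (Nat.factorial j)) ≠ 0 := by positivity
    have hj1 : ((j:ℝ)+1) ≠ 0 := by positivity
    rw [Nat.factorial_succ]
    push_cast
    field_simp
    ring

lemma deriv_comp_const_mul' (h : ℝ → ℝ) (c : ℝ) (hc : c ≠ 0) (x : ℝ) :
    deriv (fun s => h (c * s)) x = c * deriv h (c * x) := by
  by_cases hd : DifferentiableAt ℝ h (c * x)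
  · have h2 : HasDerivAt (fun s => h (c * s)) (deriv h (c * x) * c) x := by
      have h3 := HasDerivAt.comp x (hd.hasDerivAt) ((hasDerivAt_id x).const_mul c)
      simp only [mul_one] at h3
      exact h3
    rw [h2.deriv]; ring
  · rw [deriv_zero_of_not_differentiableAt hd, deriv_zero_of_not_differentiableAt, mul_zero]
    intro hcon
    apply hd
    have heq : h = (fun s => h (c * s)) ∘ (fun y => c⁻¹ * y) := by
      funext y; simp [← mul_assoc, mul_inv_cancel₀ hc]
    rw [heq]
    have := DifferentiableAt.comp (c * x)
      (by simpa [inv_mul_cancel_left₀ hc] using hcon)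
      ((differentiableAt_id).const_mul c⁻¹)
    simpa using this

lemma scaling (lam : ℝ) (hl : lam ≠ 0) : ∀ j : ℕ,
    Lop^[j] (fun s : ℝ => Real.cos (lam * s))
      = fun s => lam^(2*j) * Lop^[j] Real.cos (lam * s) := by
  intro j
  induction j with
  | zero => funext s; simp
  | succ j ih =>
    funext s
    rw [Function.iterate_succ_apply', ih]
    show deriv (fun s => lam^(2*j) * Lop^[j] Real.cos (lam * s)) s / s = _
    rw [deriv_const_mul_field, deriv_comp_const_mul' _ _ hl]
    rw [Function.iterate_succ_apply']
    show _ = lam^(2*(j+1)) * (deriv (Lop^[j] Real.cos) (lam * s) / (lam * s))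
    rcases eq_or_ne s 0 with rfl | hs
    · simp
    · field_simp; ring

/-- For every `j ∈ ℕ` there is `C_j ≥ 0` such that for all `λ > 0` and `r > 0`,
`|(L^j cos(λ·))(r)| ≤ C_j λ^{2j}`. -/
theorem stmt17 (j : ℕ) :
    ∃ C : ℝ, 0 ≤ C ∧ ∀ lam : ℝ, 0 < lam → ∀ r : ℝ, 0 < r →
      |Lop^[j] (fun s : ℝ => Real.cos (lam * s)) r| ≤ C * lam ^ (2 * j) := by
  refine ⟨1, zero_le_one, fun lam hlam r hr => ?_⟩
  rw [scaling lam hlam.ne' j, one_mul]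
  have hb : |Lop^[j] Real.cos (lam * r)| ≤ 1 := by
    cases j with
    | zero => simpa using Real.abs_cos_le_one (lam * r)
    | succ k =>
      rw [rep k (lam * r) (by positivity), abs_mul]
      have h1 : |(-1:ℝ)^(k+1) / (2^k * (Nat.factorial k))| ≤ 1 := by
        rw [abs_div, abs_pow, abs_neg, abs_one, one_pow,
          div_le_one (by positivity), abs_of_pos (by positivity)]
        have h2 : (1:ℝ) ≤ 2^k := one_le_pow₀ (by norm_num)
        have h3 : (1:ℝ) ≤ (Nat.factorial k : ℝ) := by
          exact_mod_cast Nat.one_le_iff_ne_zero.mpr (Nat.factorial_ne_zero k)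
        nlinarith
      have hN := Naux_bound k (lam * r)
      nlinarith [abs_nonneg ((-1:ℝ)^(k+1) / (2^k * (Nat.factorial k))),
        abs_nonneg (Naux k (lam * r))]
  rw [abs_mul, abs_of_pos (by positivity : (0:ℝ) < lam^(2*j))]
  nlinarith [pow_pos hlam (2*j), abs_nonneg (Lop^[j] Real.cos (lam * r))]
end

section
/- Let n ≥ 4 be an integer, let γ be a real number with 1 < γ ≤ 1 + 3/n, and let σ > 0. Then there exist real numbers p, q, p̃, q̃ ∈ (1, ∞) satisfying the compatibility conditions (i)–(vii) below together with σ ≥ ((n+1)/2)·(1/2 − 1/q). -/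
set_option maxHeartbeats 1000000 in
/-- Case (A) of the admissibility analysis: for `n ≥ 4`, `1 < γ ≤ 1 + 3/n` and
`σ > 0`, there exist exponents `p, q, p̃, q̃ ∈ (1,∞)` satisfying the
compatibility conditions (i)–(vii) together with `σ ≥ ((n+1)/2)(1/2 - 1/q)`. -/
theorem stmt18 (n : ℕ) (hn : 4 ≤ n) (γ σ : ℝ)
    (hγ1 : 1 < γ) (hγ2 : γ ≤ 1 + 3 / (n : ℝ)) (hσ : 0 < σ) :
    ∃ p q pt qt : ℝ, 1 < p ∧ 1 < q ∧ 1 < pt ∧ 1 < qt ∧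
      -- (i)
      p = pt / (pt - 1) * γ ∧
      -- (ii)  (note 1/q̃′ = 1 - 1/q̃)
      (0 < 1 - 1 / qt ∧ 1 - 1 / qt ≤ γ / q ∧ γ / q < 1) ∧
      -- (iii)
      ((n : ℝ) - 1) / 2 - ((n : ℝ) + 1) / 2 * (1 / q + 1 / qt) ≤
        (n : ℝ) * ((1 - 1 / qt) - γ / q) ∧
      -- (iv)
      ((n : ℝ) - 1) / 2 ≤ 2 / p + ((n : ℝ) - 1) / q ∧
      -- (v)
      ((n : ℝ) - 1) / 2 ≤ 2 / pt + ((n : ℝ) - 1) / qt ∧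
      -- (vi)
      (0 < 1 / p ∧ 1 / p ≤ 1 / 2 ∧
        ((n : ℝ) - 3) / (2 * ((n : ℝ) - 1)) ≤ 1 / q ∧ 1 / q < 1 / 2) ∧
      -- (vii)
      (0 < 1 / pt ∧ 1 / pt ≤ 1 / 2 ∧
        ((n : ℝ) - 3) / (2 * ((n : ℝ) - 1)) ≤ 1 / qt ∧ 1 / qt < 1 / 2) ∧
      ((n : ℝ) + 1) / 2 * (1 / 2 - 1 / q) ≤ σ := by
  have hn4 : (4 : ℝ) ≤ (n : ℝ) := by exact_mod_cast hn
  set m : ℝ := (n : ℝ)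
  have hm0 : (0 : ℝ) < m := by linarith
  have hm1 : (0 : ℝ) < m - 1 := by linarith
  have hγ0 : (0 : ℝ) < γ := by linarith
  have hγn : (γ - 1) * m ≤ 3 := by
    rw [← le_div_iff₀ hm0]; linarith
  have hγ74 : γ ≤ 7 / 4 := by
    have h34 : 3 / m ≤ 3 / 4 :=
      div_le_div_of_nonneg_left (by norm_num) (by norm_num) hn4
    linarith
  obtain ⟨ε, hε0, hε1, hε2, hε3⟩ :
      ∃ ε : ℝ, 0 < ε ∧ ε * (4 * γ) ≤ γ - 1 ∧ ε * ((m - 1) * γ) ≤ 1 ∧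
        ε * (m + 1) ≤ 2 * σ := by
    refine ⟨min ((γ - 1) / (4 * γ)) (min (1 / ((m - 1) * γ)) (2 * σ / (m + 1))),
      lt_min (div_pos (by linarith) (by positivity))
        (lt_min (by positivity) (by positivity)), ?_, ?_, ?_⟩
    · have h := min_le_left ((γ - 1) / (4 * γ)) (min (1 / ((m - 1) * γ)) (2 * σ / (m + 1)))
      rw [le_div_iff₀ (by positivity)] at h; exact h
    · have h := (min_le_right ((γ - 1) / (4 * γ)) _).trans
        (min_le_left (1 / ((m - 1) * γ)) (2 * σ / (m + 1)))
      rw [le_div_iff₀ (by positivity)] at h; exact h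
    · have h := (min_le_right ((γ - 1) / (4 * γ)) _).trans
        (min_le_right (1 / ((m - 1) * γ)) (2 * σ / (m + 1)))
      rw [le_div_iff₀ (by positivity)] at h; exact h
  have hεm : ε * (m - 1) ≤ 1 := by
    nlinarith [mul_nonneg (mul_pos hε0 hm1).le (by linarith : (0:ℝ) ≤ γ - 1)]
  have hεs : ε < 1 / 4 := by nlinarith [mul_pos hγ0 hε0]
  have hγε : 0 < γ * ε := mul_pos hγ0 hε0
  have hγε' : γ * ε ≤ (γ - 1) / 4 := by nlinarith
  obtain ⟨δ, hδ0, hδa, hδm, hδc⟩ :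
      ∃ δ : ℝ, 0 < δ ∧ δ ≤ (γ - 1) / 2 - γ * ε ∧ δ * (m - 1) ≤ 1 ∧
        ((γ - 1) / 2 - γ * ε ≤ δ ∨ δ * (m - 1) = 1) := by
    rcases le_total ((γ - 1) / 2 - γ * ε) (1 / (m - 1)) with h | h
    · refine ⟨(γ - 1) / 2 - γ * ε, by linarith, le_refl _, ?_, Or.inl (le_refl _)⟩
      rw [← le_div_iff₀ hm1]; exact h
    · refine ⟨1 / (m - 1), by positivity, h, ?_, Or.inr ?_⟩ <;>
        rw [div_mul_cancel₀ 1 hm1.ne']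
  have hδs : δ < 1 / 2 := by linarith
  have hq0 : (0 : ℝ) < 1 / 2 - ε := by linarith
  have hqt0 : (0 : ℝ) < 1 / 2 - δ := by linarith
  have eq : 1 / ((1 / 2 - ε)⁻¹) = 1 / 2 - ε := by rw [one_div, inv_inv]
  have eqt : 1 / ((1 / 2 - δ)⁻¹) = 1 / 2 - δ := by rw [one_div, inv_inv]
  have eγq : γ / ((1 / 2 - ε)⁻¹) = γ * (1 / 2 - ε) := by rw [div_eq_mul_inv, inv_inv]
  have edq : (m - 1) / ((1 / 2 - ε)⁻¹) = (m - 1) * (1 / 2 - ε) := by rw [div_eq_mul_inv, inv_inv]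
  have edqt : (m - 1) / ((1 / 2 - δ)⁻¹) = (m - 1) * (1 / 2 - δ) := by rw [div_eq_mul_inv, inv_inv]
  refine ⟨2 * γ, (1 / 2 - ε)⁻¹, 2, (1 / 2 - δ)⁻¹, by linarith,
    (one_lt_inv₀ hq0).2 (by linarith), by norm_num,
    (one_lt_inv₀ hqt0).2 (by linarith), by norm_num,
    ⟨?_, ?_, ?_⟩, ?_, ?_, ?_, ⟨by positivity, ?_, ?_, ?_⟩, ⟨by norm_num, by norm_num, ?_, ?_⟩, ?_⟩
  · rw [eqt]; linarith
  · rw [eqt, eγq]; nlinarith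
  · rw [eγq]; nlinarith
  · -- (iii)
    rw [eq, eqt, eγq]
    have key : m * (γ - 1) / 2 - 1 ≤ (m * γ - (m + 1) / 2) * ε + (m - 1) * δ / 2 := by
      have hcoef : 0 ≤ (m * γ - (m + 1) / 2) * ε := by
        apply mul_nonneg _ hε0.le; nlinarith
      rcases hδc with h | h
      · nlinarith [mul_nonneg (mul_nonneg (by linarith : (0:ℝ) ≤ m + 1)
          (by linarith : (0:ℝ) ≤ γ - 1)) hε0.le]
      · nlinarith
    nlinarith [key]
  · -- (iv)
    rw [edq, show (2:ℝ) / (2 * γ) = 1 / γ by field_simp]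
    have h4 : ε * (m - 1) ≤ 1 / γ := by
      rw [le_div_iff₀ hγ0]; nlinarith
    nlinarith [h4]
  · -- (v)
    rw [edqt]; norm_num; nlinarith
  · -- (vi) 1/p ≤ 1/2
    rw [div_le_div_iff₀ (by positivity) (by norm_num : (0:ℝ) < 2)]; linarith
  · rw [eq, div_le_iff₀ (by positivity : (0:ℝ) < 2 * (m - 1))]; nlinarith
  · rw [eq]; linarith
  · rw [eqt, div_le_iff₀ (by positivity : (0:ℝ) < 2 * (m - 1))]; nlinarith
  · rw [eqt]; linarith
  · rw [eq]; nlinarith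
end

section
/- Let n ≥ 4 be an integer, set γ₂ = (n+1)²/(n² − 2n + 5) and γ_conf = (n+3)/(n−1), let γ be a real number with γ₂ ≤ γ ≤ γ_conf, and let σ be a real number with σ ≥ (n+1)/4 − 1/(γ−1). Then there exist real numbers p, q, p̃, q̃ ∈ (1, ∞) satisfying the compatibility conditions (i)–(vii) below together with σ ≥ ((n+1)/2)·(1/2 − 1/q). -/
set_option maxHeartbeats 4000000 in
/-- Case (C) of the admissibility analysis: for `n ≥ 4`,
`γ₂ = (n+1)²/(n² - 2n + 5) ≤ γ ≤ γ_conf = (n+3)/(n-1)` and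
`σ ≥ (n+1)/4 - 1/(γ-1)`, there exist exponents `p, q, p̃, q̃ ∈ (1,∞)`
satisfying the compatibility conditions (i)–(vii) together with
`σ ≥ ((n+1)/2)(1/2 - 1/q)`. -/
theorem stmt19 (n : ℕ) (hn : 4 ≤ n) (γ σ : ℝ)
    (hγ1 : ((n : ℝ) + 1) ^ 2 / ((n : ℝ) ^ 2 - 2 * n + 5) ≤ γ)
    (hγ2 : γ ≤ ((n : ℝ) + 3) / ((n : ℝ) - 1))
    (hσ : ((n : ℝ) + 1) / 4 - 1 / (γ - 1) ≤ σ) :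
    ∃ p q pt qt : ℝ, 1 < p ∧ 1 < q ∧ 1 < pt ∧ 1 < qt ∧
      -- (i)
      p = pt / (pt - 1) * γ ∧
      -- (ii)  (note 1/q̃′ = 1 - 1/q̃)
      (0 < 1 - 1 / qt ∧ 1 - 1 / qt ≤ γ / q ∧ γ / q < 1) ∧
      -- (iii)
      ((n : ℝ) - 1) / 2 - ((n : ℝ) + 1) / 2 * (1 / q + 1 / qt) ≤
        (n : ℝ) * ((1 - 1 / qt) - γ / q) ∧
      -- (iv)
      ((n : ℝ) - 1) / 2 ≤ 2 / p + ((n : ℝ) - 1) / q ∧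
      -- (v)
      ((n : ℝ) - 1) / 2 ≤ 2 / pt + ((n : ℝ) - 1) / qt ∧
      -- (vi)
      (0 < 1 / p ∧ 1 / p ≤ 1 / 2 ∧
        ((n : ℝ) - 3) / (2 * ((n : ℝ) - 1)) ≤ 1 / q ∧ 1 / q < 1 / 2) ∧
      -- (vii)
      (0 < 1 / pt ∧ 1 / pt ≤ 1 / 2 ∧
        ((n : ℝ) - 3) / (2 * ((n : ℝ) - 1)) ≤ 1 / qt ∧ 1 / qt < 1 / 2) ∧
      ((n : ℝ) + 1) / 2 * (1 / 2 - 1 / q) ≤ σ := by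
  have hN : (4:ℝ) ≤ (n:ℝ) := by exact_mod_cast hn
  set N : ℝ := (n:ℝ) with hNdef
  have hden : (0:ℝ) < N^2 - 2*N + 5 := by nlinarith
  have hN1 : (0:ℝ) < N - 1 := by linarith
  rw [div_le_iff₀ hden] at hγ1
  rw [le_div_iff₀ hN1] at hγ2
  have hγ : (1:ℝ) < γ := by nlinarith
  have ht : (0:ℝ) < γ - 1 := by linarith
  have hγ0 : (0:ℝ) < γ := by linarith
  have hD : (0:ℝ) < (N+1) * (γ-1) := by
    have : (0:ℝ) < N+1 := by linarith
    positivity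
  -- numeric consequences of the γ-range
  have hnum1 : N+1 < γ*(N-1) := by
    nlinarith [mul_le_mul_of_nonneg_left hγ1 (by linarith : (0:ℝ) ≤ N-1), hden, hN]
  have hnum2 : γ*(N-3) < N+1 := by nlinarith
  have hnum3 : N+5 < γ*(N+1) := by
    nlinarith [mul_le_mul_of_nonneg_left hγ1 (by linarith : (0:ℝ) ≤ N+1), hden, hN]
  have hB4 : (N-1)*(γ-1) ≤ 4 := by nlinarith
  obtain ⟨a, hadef⟩ : ∃ x : ℝ, x = 2 / ((N+1)*(γ-1)) := ⟨_, rfl⟩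
  have ha : 0 < a := by rw [hadef]; positivity
  have haD : a * ((N+1)*(γ-1)) = 2 := by
    rw [hadef]; field_simp
  have hga : γ * a = 2*γ / ((N+1)*(γ-1)) := by rw [hadef]; ring
  have hga1 : 1/2 < γ * a := by rw [hga, lt_div_iff₀ hD]; nlinarith [hnum2]
  have hga2 : γ * a < 1 := by rw [hga, div_lt_iff₀ hD]; nlinarith [hnum1]
  have hga3 : 2*(N-1)*(γ*a) ≤ N+1 := by
    have h : 2*(N-1)*(γ*a) = (4*(N-1)*γ) / ((N+1)*(γ-1)) := by rw [hga]; ring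
    rw [h, div_le_iff₀ hD]; nlinarith [hγ1]
  have ha2 : a < 1/2 := by rw [hadef, div_lt_iff₀ hD]; nlinarith [hnum3]
  have ha3 : (N-3)/(2*(N-1)) ≤ a := by
    rw [hadef, div_le_div_iff₀ (by linarith : (0:ℝ) < 2*(N-1)) hD]
    nlinarith [mul_nonneg (by linarith : (0:ℝ) ≤ 4 - (N-1)*(γ-1)) hN1.le, ht]
  obtain ⟨b, hbdef⟩ : ∃ x : ℝ, x = 1 - γ * a := ⟨_, rfl⟩
  have hb1 : 0 < b := by rw [hbdef]; linarith
  have hb2 : b < 1/2 := by rw [hbdef]; linarith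
  have hb3 : (N-3)/(2*(N-1)) ≤ b := by
    rw [hbdef, div_le_iff₀ (by linarith : (0:ℝ) < 2*(N-1))]
    nlinarith [hga3]
  obtain ⟨v, hvdef⟩ : ∃ x : ℝ, x = (N-1) * (γ*a - 1/2) / 2 := ⟨_, rfl⟩
  have hv1 : 0 < v := by rw [hvdef]; nlinarith
  have hv2 : v ≤ 1/2 := by rw [hvdef]; nlinarith [hga3]
  -- the key quadratic inequality (hardest step)
  have key : 2*((N+1)*(γ-1))*(2-γ) ≤ (N-1)*(4*γ - (N+1)*(γ-1)) := by
    rcases le_or_gt N 6 with h6 | h6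
    · have hΔ : (N^2-2*N+5)^2 ≤ 32*(N^2-1) := by
        nlinarith [sq_nonneg (N-5), mul_nonneg (by linarith : (0:ℝ) ≤ N-4) (by linarith : (0:ℝ) ≤ 6-N)]
      nlinarith [sq_nonneg (4*(N+1)*(γ-1) - (N^2-2*N+5)), hΔ]
    · have hc : 2*(N+1)*((N-1)*(γ-1)+4) ≤ (N-1)*(N^2-2*N+5) := by nlinarith [hB4]
      nlinarith [mul_nonneg (by linarith : (0:ℝ) ≤ 4 - (N-1)*(γ-1))
        (by linarith : (0:ℝ) ≤ (N-1)*(N^2-2*N+5) - 2*(N+1)*((N-1)*(γ-1)+4))]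
  have e1 : 2*v*(2*((N+1)*(γ-1))) = (N-1)*(4*γ - (N+1)*(γ-1)) := by
    rw [hvdef]; linear_combination (N-1)*2*γ*haD
  have h2v : 2 - γ ≤ 2*v :=
    le_of_mul_le_mul_right (by nlinarith [key, e1] :
      (2-γ)*(2*((N+1)*(γ-1))) ≤ (2*v)*(2*((N+1)*(γ-1)))) (by positivity)
  obtain ⟨u, hudef⟩ : ∃ x : ℝ, x = (1 - v)/γ := ⟨_, rfl⟩
  have hu1 : 0 < u := by rw [hudef]; apply div_pos (by linarith) hγ0
  have hu2 : u ≤ 1/2 := by rw [hudef, div_le_iff₀ hγ0]; linarith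
  have hu3 : (N-1)/2*γ ≤ 2*(1-v) + (N-1)*a*γ := by rw [hvdef]; nlinarith [hγ2]
  have hv0 : v ≠ 0 := ne_of_gt hv1
  have h1v : (1:ℝ) - v ≠ 0 := by intro h; linarith
  have hu0 : u ≠ 0 := ne_of_gt hu1
  have ha0 : a ≠ 0 := ne_of_gt ha
  refine ⟨1/u, 1/a, 1/v, 1/b, ?_, ?_, ?_, ?_, ?_, ⟨?_, ?_, ?_⟩, ?_, ?_, ?_, ⟨?_, ?_, ?_, ?_⟩, ⟨?_, ?_, ?_, ?_⟩, ?_⟩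
  · rw [lt_div_iff₀ hu1]; linarith
  · rw [lt_div_iff₀ ha]; linarith
  · rw [lt_div_iff₀ hv1]; linarith
  · rw [lt_div_iff₀ hb1]; linarith
  · -- (i)
    rw [hudef]; field_simp
  · rw [one_div_one_div]; linarith
  · rw [one_div_one_div, one_div a, div_inv_eq_mul, hbdef]; linarith
  · rw [one_div a, div_inv_eq_mul]; exact hga2
  · -- (iii)
    rw [one_div_one_div, one_div_one_div, one_div a, div_inv_eq_mul, hbdef]
    nlinarith [haD]
  · -- (iv)
    rw [one_div u, div_inv_eq_mul, one_div a, div_inv_eq_mul]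
    have heq : (2*(1-v) + (N-1)*a*γ)/γ = 2*u + (N-1)*a := by
      rw [hudef]; field_simp
    have hfrac : (N-1)/2 ≤ (2*(1-v) + (N-1)*a*γ)/γ := by
      rw [le_div_iff₀ hγ0]; linarith
    linarith [heq ▸ hfrac]
  · -- (v)
    rw [one_div v, div_inv_eq_mul, one_div b, div_inv_eq_mul, hvdef, hbdef]
    nlinarith
  · rw [one_div_one_div]; exact hu1
  · rw [one_div_one_div]; exact hu2
  · rw [one_div_one_div]; exact ha3
  · rw [one_div_one_div]; exact ha2
  · rw [one_div_one_div]; exact hv1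
  · rw [one_div_one_div]; exact hv2
  · rw [one_div_one_div]; exact hb3
  · rw [one_div_one_div]; exact hb2
  · -- σ bound
    rw [one_div_one_div]
    have e : (N+1)*a/2 = 1/(γ-1) := by
      rw [eq_div_iff (ne_of_gt ht)]; linear_combination haD/2
    nlinarith [hσ, e]
end
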